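/- Let L be an integrable random variable with q_α(L) its lower α-quantile, P[L ≥ q_α(L)] > 0, and let S be a random vector. Then RI_{ES,α}(L|S) = (E[E[L|S] | L ≥ q_α(L)] − E[L]) / (E[L | L ≥ q_α(L)] − E[L]) ≤ 1, provided the denominator E[L | L ≥ q_α(L)] − E[L] is strictly positive. -/
import Mathlib


open MeasureTheory

/-- The lower `α`-quantile `q_α(L) = inf{y : P[L ≤ y] ≥ α}`. -/
noncomputable def lowerQuantile {Ω : Type*} {mΩ : MeasurableSpace Ω} (μ : Measure Ω)
    (L : Ω → ℝ) (α : ℝ) : ℝ :=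
  sInf {y | ENNReal.ofReal α ≤ μ {ω | L ω ≤ y}}

lemma key_condexp_tail_le {Ω : Type*} (m : MeasurableSpace Ω) {m0 : MeasurableSpace Ω}
    (μ : Measure Ω) [IsProbabilityMeasure μ] (hm : m ≤ m0)
    (L : Ω → ℝ) (hL : Integrable L μ) (hLm : Measurable[m0] L) (q : ℝ) :
    ∫ ω in {ω | q ≤ L ω}, (μ[L|m]) ω ∂μ ≤ ∫ ω in {ω | q ≤ L ω}, L ω ∂μ := by
  set A : Set Ω := {ω | q ≤ L ω} with hA_def
  have hA : MeasurableSet[m0] A := measurableSet_le measurable_const hLm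
  set i : Ω → ℝ := A.indicator (fun _ => 1) with hi_def
  have hi : Integrable i μ :=
    ((integrable_const (1:ℝ) : Integrable (fun _ : Ω => (1:ℝ)) μ)).indicator hA
  set g : Ω → ℝ := μ[i|m] with hg_def
  have hg : Integrable g μ := integrable_condExp
  have hg0 : 0 ≤ᵐ[μ] g := condExp_nonneg
    (Filter.Eventually.of_forall (Set.indicator_nonneg (fun _ _ => zero_le_one)))
  have hg1 : g ≤ᵐ[μ] fun _ => 1 := by
    have h1 : i ≤ fun _ => (1 : ℝ) :=
      Set.indicator_le' (fun _ _ => le_refl 1) (fun _ _ => zero_le_one)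
    have h2 := condExp_mono (m := m) hi (integrable_const (1:ℝ))
      (Filter.Eventually.of_forall h1)
    calc g ≤ᵐ[μ] μ[(fun _ => (1:ℝ))|m] := h2
    _ = fun _ => 1 := condExp_const hm 1
  set Y : Ω → ℝ := μ[L|m] with hY_def
  have hY : Integrable Y μ := integrable_condExp
  have hYm : StronglyMeasurable[m] Y := stronglyMeasurable_condExp
  have hgm : StronglyMeasurable[m] g := stronglyMeasurable_condExp
  have hib : ∀ ω, ‖i ω‖ ≤ 1 := by
    intro ω; simp only [hi_def, Set.indicator_apply]; split_ifs <;> simp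
  have hYi : Integrable (Y * i) μ := by
    have h := hY.bdd_mul (c := 1) (f := i) hi.1 (Filter.Eventually.of_forall hib)
    exact h.congr (Filter.Eventually.of_forall fun ω => mul_comm _ _)
  have hgbound : ∀ᵐ ω ∂μ, ‖g ω‖ ≤ 1 := by
    filter_upwards [hg0, hg1] with ω h0 h1
    have h0' : (0:ℝ) ≤ g ω := h0
    have h1' : g ω ≤ 1 := h1
    rw [Real.norm_eq_abs, abs_le]; constructor <;> linarith
  have hgL : Integrable (g * L) μ := hL.bdd_mul (hgm.mono hm).aestronglyMeasurable hgbound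
  have hLi : Integrable (fun ω => L ω * i ω) μ := by
    have h := hL.bdd_mul (c := 1) (f := i) hi.1 (Filter.Eventually.of_forall hib)
    exact h.congr (Filter.Eventually.of_forall fun ω => mul_comm _ _)
  -- Step A : ∫_A Y = ∫ Y * i
  have stepA : ∫ ω in A, Y ω ∂μ = ∫ ω, (Y * i) ω ∂μ := by
    rw [← integral_indicator hA]
    refine integral_congr_ae (Filter.Eventually.of_forall fun ω => ?_)
    simp only [Pi.mul_apply, hi_def, Set.indicator_apply]
    split_ifs <;> simp
  -- Step B : ∫ Y * i = ∫ Y * g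
  have stepB : ∫ ω, (Y * i) ω ∂μ = ∫ ω, Y ω * g ω ∂μ := by
    rw [← integral_condExp hm (f := Y * i)]
    exact integral_congr_ae (condExp_mul_of_stronglyMeasurable_left hYm hYi hi)
  -- Step C : ∫ Y * g = ∫ g * L
  have stepC : ∫ ω, Y ω * g ω ∂μ = ∫ ω, (g * L) ω ∂μ := by
    rw [← integral_condExp hm (f := g * L)]
    refine (integral_congr_ae ?_).symm
    calc μ[g * L|m] =ᵐ[μ] g * μ[L|m] := condExp_mul_of_stronglyMeasurable_left hgm hgL hL
    _ = fun ω => Y ω * g ω := by funext ω; exact mul_comm _ _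
  -- Step D : ∫ g * L ≤ ∫ L * i
  have hgi_eq : ∫ ω, g ω ∂μ = ∫ ω, i ω ∂μ := integral_condExp hm
  have hprod : ∀ᵐ ω ∂μ, (L ω - q) * (g ω - i ω) ≤ 0 := by
    filter_upwards [hg0, hg1] with ω h0 h1
    have h0' : (0:ℝ) ≤ g ω := h0
    have h1' : g ω ≤ 1 := h1
    by_cases hω : ω ∈ A
    · have hiω : i ω = 1 := by simp [hi_def, hω]
      have hq : q ≤ L ω := hω
      rw [hiω]
      exact mul_nonpos_of_nonneg_of_nonpos (by linarith) (by linarith)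
    · have hiω : i ω = 0 := by simp [hi_def, hω]
      have hq : L ω < q := lt_of_not_ge hω
      rw [hiω]
      exact mul_nonpos_of_nonpos_of_nonneg (by linarith) (by linarith)
  have hprod_int : Integrable (fun ω => (L ω - q) * (g ω - i ω)) μ := by
    have hLq : Integrable (fun ω => L ω - q) μ := hL.sub (integrable_const q)
    have h : Integrable (fun ω => (g ω - i ω) * (L ω - q)) μ := by
      refine hLq.bdd_mul (c := 2) ((hgm.mono hm).aestronglyMeasurable.sub hi.1) ?_
      filter_upwards [hgbound] with ω hb
      calc ‖g ω - i ω‖ ≤ ‖g ω‖ + ‖i ω‖ := norm_sub_le _ _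
      _ ≤ 2 := by linarith [hib ω]
    exact h.congr (Filter.Eventually.of_forall fun ω => mul_comm _ _)
  have hint_le : ∫ ω, (L ω - q) * (g ω - i ω) ∂μ ≤ 0 := integral_nonpos_of_ae hprod
  have hgL' : Integrable (fun ω => g ω * L ω) μ := hgL
  have hf1 : Integrable (fun ω => g ω * L ω - L ω * i ω) μ := hgL'.sub hLi
  have hf2 : Integrable (fun ω => q * g ω - q * i ω) μ := (hg.const_mul q).sub (hi.const_mul q)
  have key0 : ∫ ω, (L ω - q) * (g ω - i ω) ∂μ
      = (∫ ω, (g ω * L ω - L ω * i ω) ∂μ) - ∫ ω, (q * g ω - q * i ω) ∂μ := by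
    rw [← integral_sub hf1 hf2]
    exact integral_congr_ae (Filter.Eventually.of_forall fun ω => by ring)
  have e1 : ∫ ω, (g ω * L ω - L ω * i ω) ∂μ = ∫ ω, (g * L) ω ∂μ - ∫ ω, L ω * i ω ∂μ :=
    integral_sub hgL' hLi
  have e2 : ∫ ω, (q * g ω - q * i ω) ∂μ = q * ∫ ω, g ω ∂μ - q * ∫ ω, i ω ∂μ := by
    rw [integral_sub (hg.const_mul q) (hi.const_mul q), integral_const_mul, integral_const_mul]
  have stepD : ∫ ω, (g * L) ω ∂μ ≤ ∫ ω, L ω * i ω ∂μ := by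
    rw [key0, e1, e2, hgi_eq] at hint_le
    linarith
  -- Step E : ∫ L * i = ∫_A L
  have stepE : ∫ ω, L ω * i ω ∂μ = ∫ ω in A, L ω ∂μ := by
    rw [← integral_indicator hA]
    refine integral_congr_ae (Filter.Eventually.of_forall fun ω => ?_)
    simp only [hi_def, Set.indicator_apply]
    split_ifs <;> simp
  calc ∫ ω in A, Y ω ∂μ = ∫ ω, Y ω * g ω ∂μ := stepA.trans stepB
  _ = ∫ ω, (g * L) ω ∂μ := stepC
  _ ≤ ∫ ω, L ω * i ω ∂μ := stepD
  _ = ∫ ω in A, L ω ∂μ := stepE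

/-- Upper bound 1 for the Expected-Shortfall-based risk impact:
`RI_{ES,α}(L|S) = (E[E[L|S] | L ≥ q_α(L)] − E[L]) / (E[L | L ≥ q_α(L)] − E[L]) ≤ 1`. -/
theorem risk_impact_ES_le_one {Ω : Type*} {m0 : MeasurableSpace Ω}
    (μ : Measure Ω) [IsProbabilityMeasure μ] (m : MeasurableSpace Ω) (hm : m ≤ m0)
    (L : Ω → ℝ) (hL : Integrable L μ) (α : ℝ) (hα : α ∈ Set.Ioo (0 : ℝ) 1)
    (htail : 0 < μ {ω | lowerQuantile μ L α ≤ L ω})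
    (hcont : μ {ω | L ω = lowerQuantile μ L α} = 0)
    (hden : 0 < (∫ ω in {ω | lowerQuantile μ L α ≤ L ω}, L ω ∂μ)
        / (μ {ω | lowerQuantile μ L α ≤ L ω}).toReal - ∫ ω, L ω ∂μ) :
    ((∫ ω in {ω | lowerQuantile μ L α ≤ L ω}, (μ[L|m]) ω ∂μ)
          / (μ {ω | lowerQuantile μ L α ≤ L ω}).toReal - ∫ ω, L ω ∂μ)
        / ((∫ ω in {ω | lowerQuantile μ L α ≤ L ω}, L ω ∂μ)
          / (μ {ω | lowerQuantile μ L α ≤ L ω}).toReal - ∫ ω, L ω ∂μ) ≤ 1 := by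
  set q : ℝ := lowerQuantile μ L α with hq_def
  set A : Set Ω := {ω | q ≤ L ω} with hA_def
  -- pass to a strongly measurable representative of L
  obtain ⟨L', hsm, hae⟩ : ∃ L' : Ω → ℝ, StronglyMeasurable[m0] L' ∧ L =ᵐ[μ] L' :=
    ⟨hL.1.mk L, hL.1.stronglyMeasurable_mk, hL.1.ae_eq_mk⟩
  set A' : Set Ω := {ω | q ≤ L' ω} with hA'_def
  have hAA' : A =ᵐ[μ] A' := by
    refine Filter.eventuallyEq_set.2 ?_
    filter_upwards [hae] with ω h
    simp only [hA_def, hA'_def, Set.mem_setOf_eq, h]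
  have hres : μ.restrict A = μ.restrict A' := Measure.restrict_congr_set hAA'
  have hL' : Integrable L' μ := hL.congr hae
  have hcd : μ[L|m] =ᵐ[μ] μ[L'|m] := condExp_congr_ae hae
  have hnum_eq : ∫ ω in A, (μ[L|m]) ω ∂μ = ∫ ω in A', (μ[L'|m]) ω ∂μ := by
    rw [hres]; exact integral_congr_ae (ae_restrict_of_ae hcd)
  have hden_eq : ∫ ω in A, L ω ∂μ = ∫ ω in A', L' ω ∂μ := by
    rw [hres]; exact integral_congr_ae (ae_restrict_of_ae hae)
  have hkey : ∫ ω in A, (μ[L|m]) ω ∂μ ≤ ∫ ω in A, L ω ∂μ := by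
    rw [hnum_eq, hden_eq]
    exact key_condexp_tail_le m μ hm L' hL' (hsm.measurable : Measurable[m0] L') q
  have hp : 0 < (μ A).toReal := ENNReal.toReal_pos htail.ne' (measure_ne_top μ A)
  rw [div_le_one hden]
  have h2 : (∫ ω in A, (μ[L|m]) ω ∂μ) / (μ A).toReal ≤ (∫ ω in A, L ω ∂μ) / (μ A).toReal := by
    gcongr
  exact sub_le_sub_right h2 _
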